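/- Let R be a finite commutative chain ring with maximal ideal γR and residue field F_q, λ a non-invertible element of R, n ≥ 1, and S = R[x]/⟨x^n − λ⟩. Then an element a ∈ S is non-invertible if and only if a ∈ ⟨γ, x⟩; consequently ⟨γ, x⟩ is the unique maximal ideal of S and S/⟨γ, x⟩ ≅ F_q. In particular, S is a finite local ring. -/

import Mathlib

/-- In `S = R[x]/⟨x^n − λ⟩` with `λ` non-invertible, an element is
non-invertible iff it lies in `⟨γ, x⟩`; `⟨γ, x⟩` is the unique maximal ideal of
`S`, `S/⟨γ, x⟩ ≅ F_q`, and `S` is a finite local ring. -/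
theorem stmt_6 {R : Type} [CommRing R] [Fintype R] [IsLocalRing R]
    (γ : R) (e : ℕ)
    (hchain : ∀ I J : Ideal R, I ≤ J ∨ J ≤ I)
    (hmax : IsLocalRing.maximalIdeal R = Ideal.span {γ})
    (he : 0 < e) (hγe : γ ^ e = 0)
    (hγlt : ∀ k, 0 < k → k < e → γ ^ k ≠ 0)
    (lam : R) (hlam : ¬ IsUnit lam)
    (n : ℕ) (hn : 0 < n)
    (J : Ideal (Polynomial R))
    (hJ : J = Ideal.span {Polynomial.X ^ n - Polynomial.C lam})
    (I : Ideal (Polynomial R ⧸ J))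
    (hI : I = Ideal.span
      {Ideal.Quotient.mk J (Polynomial.C γ), Ideal.Quotient.mk J Polynomial.X}) :
    (∀ a : Polynomial R ⧸ J, ¬ IsUnit a ↔ a ∈ I) ∧
    I.IsMaximal ∧
    (∀ M : Ideal (Polynomial R ⧸ J), M.IsMaximal → M = I) ∧
    Nonempty (((Polynomial R ⧸ J) ⧸ I) ≃+* (R ⧸ Ideal.span {γ})) ∧
    IsLocalRing (Polynomial R ⧸ J) := by
  classical
  -- λ is a multiple of γ
  have hlam_mem : lam ∈ Ideal.span {γ} := by
    rw [← hmax]; exact hlam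
  obtain ⟨c, hc⟩ := Ideal.mem_span_singleton'.mp hlam_mem
  -- K is the preimage ideal
  set K : Ideal (Polynomial R) := Ideal.span {Polynomial.C γ, Polynomial.X} with hK
  have hCγK : Polynomial.C γ ∈ K := Ideal.subset_span (by simp)
  have hXK : (Polynomial.X : Polynomial R) ∈ K := Ideal.subset_span (by simp)
  have hClamK : Polynomial.C lam ∈ K := by
    rw [← hc, map_mul]
    exact Ideal.mul_mem_left _ _ hCγK
  have hJK : J ≤ K := by
    rw [hJ, Ideal.span_le, Set.singleton_subset_iff]
    exact Ideal.sub_mem _ (Ideal.pow_mem_of_mem _ hXK n hn) hClamK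
  have hIK : I = K.map (Ideal.Quotient.mk J) := by
    rw [hI, hK, Ideal.map_span]
    congr 1
    simp [Set.image_insert_eq]
  -- the ring hom R[X] → R/(γ) by constant coefficient
  set φ : Polynomial R →+* R ⧸ Ideal.span {γ} :=
    (Ideal.Quotient.mk (Ideal.span {γ})).comp Polynomial.constantCoeff with hφ
  have hφsurj : Function.Surjective φ := fun r => by
    obtain ⟨s, rfl⟩ := Ideal.Quotient.mk_surjective r
    exact ⟨Polynomial.C s, by simp [hφ]⟩
  have hker : RingHom.ker φ = K := by
    apply le_antisymm
    · intro p hp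
      have hp0 : p.coeff 0 ∈ Ideal.span {γ} := by
        have h := hp
        rw [RingHom.mem_ker, hφ, RingHom.comp_apply, Ideal.Quotient.eq_zero_iff_mem] at h
        simpa using h
      obtain ⟨d, hd⟩ := Ideal.mem_span_singleton'.mp hp0
      have hdec : Polynomial.X * p.divX + Polynomial.C (p.coeff 0) = p :=
        Polynomial.X_mul_divX_add p
      rw [← hdec, ← hd, map_mul]
      exact Ideal.add_mem _ (Ideal.mul_mem_right _ _ hXK)
        (Ideal.mul_mem_left _ _ hCγK)
    · rw [hK, Ideal.span_le]
      rintro p hp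
      rcases hp with rfl | hp
      · simp [RingHom.mem_ker, hφ, Ideal.Quotient.eq_zero_iff_mem,
          Ideal.mem_span_singleton]
      · rcases hp with rfl
        simp [RingHom.mem_ker, hφ]
  -- isomorphism S/I ≃ R/(γ)
  have equiv : ((Polynomial R ⧸ J) ⧸ I) ≃+* (R ⧸ Ideal.span {γ}) :=
    ((Ideal.quotEquivOfEq hIK).trans (DoubleQuot.quotQuotEquivQuotOfLE hJK)).trans
      ((Ideal.quotEquivOfEq hker.symm).trans (RingHom.quotientKerEquivOfSurjective hφsurj))
  -- R/(γ) is a field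
  haveI hspanmax : (Ideal.span {γ}).IsMaximal := hmax ▸ inferInstance
  letI : Field (R ⧸ Ideal.span {γ}) := Ideal.Quotient.field _
  have hIfield : IsField ((Polynomial R ⧸ J) ⧸ I) :=
    MulEquiv.isField (Field.toIsField _) equiv.toMulEquiv
  have hImax : I.IsMaximal := Ideal.Quotient.maximal_of_isField I hIfield
  -- nilpotency of generators
  have hnilCγ : IsNilpotent (Ideal.Quotient.mk J (Polynomial.C γ)) :=
    ⟨e, by rw [← map_pow, ← Polynomial.C_pow, hγe, map_zero, map_zero]⟩
  have hlame : lam ^ e = 0 := by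
    rw [← hc, mul_pow, hγe, mul_zero]
  have hXnlam : Ideal.Quotient.mk J (Polynomial.X ^ n) = Ideal.Quotient.mk J (Polynomial.C lam) := by
    rw [Ideal.Quotient.eq, hJ]
    exact Ideal.subset_span rfl
  have hnilX : IsNilpotent (Ideal.Quotient.mk J (Polynomial.X : Polynomial R)) := by
    refine ⟨n * e, ?_⟩
    rw [← map_pow, pow_mul, map_pow, hXnlam, ← map_pow, ← Polynomial.C_pow, hlame,
      map_zero, map_zero]
  have hInil : I ≤ nilradical (Polynomial R ⧸ J) := by
    rw [hI, Ideal.span_le]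
    rintro x hx
    rcases hx with rfl | hx
    · exact hnilCγ
    · rcases hx with rfl
      exact hnilX
  -- uniqueness of maximal ideal
  have huniq : ∀ M : Ideal (Polynomial R ⧸ J), M.IsMaximal → M = I := by
    intro M hM
    haveI := hM
    have hle : I ≤ M := le_trans hInil (nilradical_le_prime M)
    exact (hImax.eq_of_le hM.ne_top hle).symm
  haveI hlocal : IsLocalRing (Polynomial R ⧸ J) :=
    IsLocalRing.of_unique_max_ideal ⟨I, hImax, huniq⟩
  refine ⟨?_, hImax, huniq, ⟨equiv⟩, hlocal⟩
  intro a
  constructor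
  · intro ha
    have : a ∈ IsLocalRing.maximalIdeal (Polynomial R ⧸ J) := ha
    rwa [huniq _ (IsLocalRing.maximalIdeal.isMaximal _)] at this
  · intro ha hu
    exact hImax.ne_top (Ideal.eq_top_of_isUnit_mem I ha hu)
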